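/- For A ∈ GL_n(ℂ), let M_1(A) denote the algebraic multiplicity of the eigenvalue 1 divided by n. Then M_1(A ⊗ A) ≤ M_1(A)² + (1 - M_1(A))². -/

import Mathlib

open Matrix Kronecker

/-- `M₁ A` : the algebraic multiplicity of the eigenvalue `1` of `A`, divided by the size. -/
noncomputable def M1 {m : Type*} [Fintype m] [DecidableEq m] (A : Matrix m m ℂ) : ℝ :=
  (A.charpoly.roots.count 1 : ℝ) / Fintype.card m

open Polynomial

namespace M1Aux

lemma eval_charpoly {m : Type*} [Fintype m] [DecidableEq m] (M : Matrix m m ℂ) (μ : ℂ) :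
    M.charpoly.eval μ = (μ • (1 : Matrix m m ℂ) - M).det := by
  rw [Matrix.charpoly, ← Polynomial.coe_evalRingHom, RingHom.map_det]
  congr 1
  ext i j
  by_cases h : i = j <;>
    simp [h, Matrix.charmatrix_apply, Matrix.diagonal_apply, Matrix.one_apply]


lemma charpoly_conj {m : Type*} [Fintype m] [DecidableEq m] (U M : Matrix m m ℂ)
    (hU : IsUnit U.det) : (U * M * U⁻¹).charpoly = M.charpoly := by
  have h1 : U * U⁻¹ = 1 := Matrix.mul_nonsing_inv U hU
  set P := (C : ℂ →+* ℂ[X]).mapMatrix U with hP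
  set Q := (C : ℂ →+* ℂ[X]).mapMatrix U⁻¹ with hQ
  have hPQ : P * Q = 1 := by rw [hP, hQ, ← _root_.map_mul, h1, _root_.map_one]
  have key : Matrix.charmatrix (U * M * U⁻¹) = P * Matrix.charmatrix M * Q := by
    rw [Matrix.charmatrix, Matrix.charmatrix, mul_sub, sub_mul]
    congr 1
    · have hcomm : P * Matrix.scalar m (X : ℂ[X]) = Matrix.scalar m (X : ℂ[X]) * P := by
        ext i j
        simp [Matrix.mul_apply, Matrix.scalar_apply, Matrix.diagonal_apply, mul_comm]
      rw [hcomm, Matrix.mul_assoc, hPQ, Matrix.mul_one]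
    · rw [_root_.map_mul, _root_.map_mul]
  unfold Matrix.charpoly
  rw [key, Matrix.det_mul, Matrix.det_mul, mul_right_comm, ← Matrix.det_mul, hPQ,
    Matrix.det_one, one_mul]

lemma roots_prod {ι : Type*} [Fintype ι] [DecidableEq ι] (d : ι → ℂ) :
    (∏ i : ι, (X - C (d i))).roots = Finset.univ.val.map d := by
  have h : (∏ i : ι, (X - C (d i)))
      = (Multiset.map (fun a => X - C a) (Finset.univ.val.map d)).prod := by
    rw [Multiset.map_map]; rfl
  rw [h, Polynomial.roots_multiset_prod_X_sub_C]

lemma exists_triangular :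
    ∀ (n : ℕ) (A : Matrix (Fin n) (Fin n) ℂ),
      ∃ U : Matrix (Fin n) (Fin n) ℂ, IsUnit U.det ∧ (U⁻¹ * A * U).BlockTriangular id := by
  intro n
  induction n with
  | zero => exact fun A => ⟨1, by simp, fun i _ _ => i.elim0⟩
  | succ n ih =>
    intro A
    obtain ⟨μ, hμ⟩ : ∃ μ, A.charpoly.IsRoot μ := by
      apply IsAlgClosed.exists_root
      rw [Matrix.charpoly_degree_eq_dim, Fintype.card_fin]
      exact_mod_cast (Nat.succ_ne_zero n)
    have hdet : (μ • (1 : Matrix (Fin (n+1)) (Fin (n+1)) ℂ) - A).det = 0 := by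
      rw [← eval_charpoly]; exact hμ
    obtain ⟨v, hv0, hv⟩ := Matrix.exists_mulVec_eq_zero_iff.mpr hdet
    have hAv : A *ᵥ v = μ • v := by
      rw [Matrix.sub_mulVec, Matrix.smul_mulVec, Matrix.one_mulVec, sub_eq_zero] at hv
      exact hv.symm
    obtain ⟨i, hvi⟩ : ∃ i, v i ≠ 0 := by
      by_contra h; push_neg at h; exact hv0 (funext h)
    set σ : Equiv.Perm (Fin (n+1)) := Equiv.swap 0 i with hσ
    set U₁ : Matrix (Fin (n+1)) (Fin (n+1)) ℂ :=
      ((1 : Matrix (Fin (n+1)) (Fin (n+1)) ℂ).updateCol i v).submatrix id ⇑σ with hU₁def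
    have hU₀det : ((1 : Matrix (Fin (n+1)) (Fin (n+1)) ℂ).updateCol i v).det = v i := by
      rw [← Matrix.cramer_apply, Matrix.cramer_one]; rfl
    have hU₁det : IsUnit U₁.det := by
      rw [hU₁def, Matrix.det_permute', hU₀det]
      have hs : IsUnit ((((Equiv.Perm.sign σ : ℤˣ) : ℤ)) : ℂ) := by
        rcases Int.units_eq_one_or (Equiv.Perm.sign σ) with h | h <;> simp [h]
      exact hs.mul (isUnit_iff_ne_zero.mpr hvi)
    set w : Fin (n+1) → ℂ := Pi.single 0 1 with hw
    have hcol : U₁ *ᵥ w = v := by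
      rw [hw, Matrix.mulVec_single]
      funext a
      simp [hU₁def, Matrix.submatrix_apply, hσ, Equiv.swap_apply_left,
        Matrix.updateCol_apply]
    set M := U₁⁻¹ * A * U₁ with hM
    have hMe : M *ᵥ w = μ • w := by
      rw [hM, ← Matrix.mulVec_mulVec, ← Matrix.mulVec_mulVec, hcol, hAv,
        Matrix.mulVec_smul, ← hcol, Matrix.mulVec_mulVec,
        Matrix.nonsing_inv_mul _ hU₁det, Matrix.one_mulVec]
    have hM0 : ∀ j : Fin n, M (Fin.succ j) 0 = 0 := by
      intro j
      have h := congrFun hMe (Fin.succ j)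
      rw [hw] at h
      simpa [Matrix.mulVec_single, Pi.single_eq_of_ne (Fin.succ_ne_zero j)] using h
    obtain ⟨W, hWdet, hWtri⟩ := ih (M.submatrix Fin.succ Fin.succ)
    set e : (Fin 1 ⊕ Fin n) ≃ Fin (n+1) := finSumFinEquiv.trans (finCongr (Nat.add_comm 1 n))
      with he
    have he0 : e (Sum.inl 0) = 0 := by
      apply Fin.ext; simp [he]
    have hes : ∀ j : Fin n, e (Sum.inr j) = Fin.succ j := by
      intro j; apply Fin.ext; simp [he, Nat.add_comm]
    set X : Matrix (Fin 1 ⊕ Fin n) (Fin 1 ⊕ Fin n) ℂ := fromBlocks 1 0 0 W with hX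
    set X' : Matrix (Fin 1 ⊕ Fin n) (Fin 1 ⊕ Fin n) ℂ := fromBlocks 1 0 0 W⁻¹ with hX'
    have hXX' : X * X' = 1 := by
      rw [hX, hX', Matrix.fromBlocks_multiply]
      simp [Matrix.mul_nonsing_inv _ hWdet, Matrix.fromBlocks_one]
    set V : Matrix (Fin (n+1)) (Fin (n+1)) ℂ := X.submatrix ⇑e.symm ⇑e.symm with hV
    set V' : Matrix (Fin (n+1)) (Fin (n+1)) ℂ := X'.submatrix ⇑e.symm ⇑e.symm with hV'
    have hVV' : V * V' = 1 := by
      rw [hV, hV', Matrix.submatrix_mul_equiv, hXX', Matrix.submatrix_one_equiv]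
    have hVdet : IsUnit V.det := by
      rw [hV, Matrix.det_submatrix_equiv_self e.symm, hX, Matrix.det_fromBlocks_zero₂₁]
      simpa using hWdet
    refine ⟨U₁ * V, ?_, ?_⟩
    · rw [Matrix.det_mul]; exact hU₁det.mul hVdet
    · have hG : (U₁ * V)⁻¹ * A * (U₁ * V) = V' * M * V := by
        rw [Matrix.mul_inv_rev, Matrix.inv_eq_right_inv hVV', hM]
        simp only [Matrix.mul_assoc]
      rw [hG]
      -- rewrite the middle as a block matrix
      have hMeq : M = (M.submatrix ⇑e ⇑e).submatrix ⇑e.symm ⇑e.symm := by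
        rw [Matrix.submatrix_submatrix, Equiv.self_comp_symm, Matrix.submatrix_id_id]
      set Y := M.submatrix ⇑e ⇑e with hY
      have hY21 : Y.toBlocks₂₁ = 0 := by
        ext a b
        have hb : b = 0 := Subsingleton.elim _ _
        simp only [Matrix.toBlocks₂₁, Matrix.of_apply, hY, Matrix.submatrix_apply, hb, he0]
        rw [hes a]
        exact hM0 a
      have hYeq : Y = fromBlocks Y.toBlocks₁₁ Y.toBlocks₁₂ 0 Y.toBlocks₂₂ := by
        conv_lhs => rw [← Matrix.fromBlocks_toBlocks Y]
        rw [hY21]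
      have hB : Y.toBlocks₂₂ = M.submatrix Fin.succ Fin.succ := by
        ext a b
        simp [Matrix.toBlocks₂₂, hY, Matrix.submatrix_apply, hes]
      have hprod : V' * M * V
          = ((X' * Y * X).submatrix ⇑e.symm ⇑e.symm) := by
        conv_lhs => rw [hMeq]
        rw [Matrix.submatrix_mul_equiv, Matrix.submatrix_mul_equiv]
      rw [hprod]
      have hblocks : X' * Y * X = fromBlocks (Y.toBlocks₁₁) (Y.toBlocks₁₂ * W) 0
          (W⁻¹ * (M.submatrix Fin.succ Fin.succ) * W) := by
        rw [hX, hX', hYeq, hB, Matrix.fromBlocks_multiply, Matrix.fromBlocks_multiply]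
        congr 1 <;> simp [Matrix.mul_assoc]
      rw [hblocks]
      intro p q hlt
      simp only [id] at hlt
      rcases hp : e.symm p with x | x <;> rcases hq : e.symm q with y | y
      · exfalso
        have hx : x = 0 := Subsingleton.elim _ _
        have hy : y = 0 := Subsingleton.elim _ _
        have : p = q := by
          rw [← e.apply_symm_apply p, ← e.apply_symm_apply q, hp, hq, hx, hy]
        exact absurd this.symm (ne_of_lt hlt)
      · exfalso
        have hx : x = 0 := Subsingleton.elim _ _
        have hp0 : p = 0 := by rw [← e.apply_symm_apply p, hp, hx, he0]
        rw [hp0] at hlt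
        exact (Fin.not_lt_zero q) hlt
      · simp [Matrix.submatrix_apply, hp, hq, Matrix.fromBlocks_apply₂₁]
      · have hxy : y < x := by
          have hp' : p = Fin.succ x := by rw [← e.apply_symm_apply p, hp, hes]
          have hq' : q = Fin.succ y := by rw [← e.apply_symm_apply q, hq, hes]
          rw [hp', hq'] at hlt
          exact (Fin.succ_lt_succ_iff).mp hlt
        simp only [Matrix.submatrix_apply, hp, hq, Matrix.fromBlocks_apply₂₂]
        exact hWtri hxy

end M1Aux

theorem M1_kronecker_le {n : ℕ} (A : Matrix (Fin n) (Fin n) ℂ) (hA : IsUnit A) :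
    M1 (A ⊗ₖ A) ≤ M1 A ^ 2 + (1 - M1 A) ^ 2 := by
  classical
  obtain ⟨U, hUdet, hTtri⟩ := M1Aux.exists_triangular n A
  set T := U⁻¹ * A * U with hT
  set d : Fin n → ℂ := fun i => T i i with hd
  have hAeq : A = U * T * U⁻¹ := by
    rw [hT]
    have h1 : U * (U⁻¹ * A * U) * U⁻¹ = (U * U⁻¹) * A * (U * U⁻¹) := by
      simp only [Matrix.mul_assoc]
    rw [h1, Matrix.mul_nonsing_inv _ hUdet, Matrix.one_mul, Matrix.mul_one]
  have hchA : A.charpoly = ∏ i, (X - C (d i)) := by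
    conv_lhs => rw [hAeq]
    rw [M1Aux.charpoly_conj _ _ hUdet, Matrix.charpoly_of_upperTriangular T hTtri]
  have hinv : (U ⊗ₖ U)⁻¹ = U⁻¹ ⊗ₖ U⁻¹ := Matrix.inv_eq_right_inv (by
    rw [← Matrix.mul_kronecker_mul, Matrix.mul_nonsing_inv _ hUdet, Matrix.one_kronecker_one])
  have hKdet : IsUnit (U ⊗ₖ U).det := by
    rw [Matrix.det_kronecker]
    exact (hUdet.pow _).mul (hUdet.pow _)
  have hKeq : A ⊗ₖ A = (U ⊗ₖ U) * (T ⊗ₖ T) * (U ⊗ₖ U)⁻¹ := by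
    rw [hinv, ← Matrix.mul_kronecker_mul, ← Matrix.mul_kronecker_mul, ← hAeq]
  have hKtri : ((Matrix.reindex (toLex : (Fin n × Fin n) ≃ Lex (Fin n × Fin n)) toLex)
      (T ⊗ₖ T)).BlockTriangular id := by
    intro p q hlt
    have hlt' : (toLex.symm q).1 < (toLex.symm p).1 ∨
        ((toLex.symm q).1 = (toLex.symm p).1 ∧ (toLex.symm q).2 < (toLex.symm p).2) :=
      Prod.Lex.lt_iff.mp hlt
    rcases hlt' with h | ⟨h1, h2⟩
    · simp only [Matrix.reindex_apply, Matrix.submatrix_apply, Matrix.kroneckerMap_apply]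
      rw [hTtri h, zero_mul]
    · simp only [Matrix.reindex_apply, Matrix.submatrix_apply, Matrix.kroneckerMap_apply]
      rw [hTtri h2, mul_zero]
  have hchK : (A ⊗ₖ A).charpoly
      = ∏ p : Lex (Fin n × Fin n), (X - C (d (toLex.symm p).1 * d (toLex.symm p).2)) := by
    rw [hKeq, M1Aux.charpoly_conj _ _ hKdet,
      ← Matrix.charpoly_reindex (toLex : (Fin n × Fin n) ≃ Lex (Fin n × Fin n)) (T ⊗ₖ T),
      Matrix.charpoly_of_upperTriangular _ hKtri]
    rfl
  have hrootsA : A.charpoly.roots = Finset.univ.val.map d := by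
    rw [hchA, M1Aux.roots_prod]
  have hrootsK : (A ⊗ₖ A).charpoly.roots
      = Finset.univ.val.map (fun p : Fin n × Fin n => d p.1 * d p.2) := by
    rw [hchK, M1Aux.roots_prod]
    have h3 : (Finset.univ.val : Multiset (Lex (Fin n × Fin n))).map
          (fun p => d (toLex.symm p).1 * d (toLex.symm p).2)
        = ((Finset.univ.val : Multiset (Lex (Fin n × Fin n))).map
            ⇑(ofLex : Lex (Fin n × Fin n) ≃ (Fin n × Fin n))).map
            (fun p : Fin n × Fin n => d p.1 * d p.2) := by
      rw [Multiset.map_map]; rfl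
    rw [h3]
    congr 1
    have h2 := congrArg Finset.val
      (Finset.map_univ_equiv (ofLex : Lex (Fin n × Fin n) ≃ (Fin n × Fin n)))
    simpa [Finset.map_val] using h2
  set S : Finset (Fin n) := Finset.univ.filter (fun i => (1:ℂ) = d i) with hS
  set P : Finset (Fin n × Fin n) := Finset.univ.filter (fun p => (1:ℂ) = d p.1 * d p.2) with hPdef
  have hcountA : A.charpoly.roots.count 1 = S.card := by
    rw [hrootsA, Multiset.count_map]
    rfl
  have hcountK : (A ⊗ₖ A).charpoly.roots.count 1 = P.card := by
    rw [hrootsK, Multiset.count_map]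
    rfl
  have hk_le : S.card ≤ n := by
    simpa using Finset.card_filter_le Finset.univ (fun i => (1:ℂ) = d i)
  have hmain : P.card ≤ S.card * S.card + (n - S.card) * (n - S.card) := by
    have hsub : P ⊆ S ×ˢ S ∪ Sᶜ ×ˢ Sᶜ := by
      intro p hp
      rw [hPdef, Finset.mem_filter] at hp
      obtain ⟨-, hp⟩ := hp
      by_cases h1 : (1:ℂ) = d p.1
      · have h2 : (1:ℂ) = d p.2 := by rw [← h1, one_mul] at hp; exact hp
        exact Finset.mem_union_left _ (Finset.mem_product.mpr
          ⟨Finset.mem_filter.mpr ⟨Finset.mem_univ _, h1⟩,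
           Finset.mem_filter.mpr ⟨Finset.mem_univ _, h2⟩⟩)
      · have h2 : ¬ ((1:ℂ) = d p.2) := by
          intro h2
          rw [← h2, mul_one] at hp
          exact h1 hp
        exact Finset.mem_union_right _ (Finset.mem_product.mpr
          ⟨Finset.mem_compl.mpr (fun hmem => h1 (Finset.mem_filter.mp hmem).2),
           Finset.mem_compl.mpr (fun hmem => h2 (Finset.mem_filter.mp hmem).2)⟩)
    calc P.card ≤ (S ×ˢ S ∪ Sᶜ ×ˢ Sᶜ).card := Finset.card_le_card hsub
      _ ≤ (S ×ˢ S).card + (Sᶜ ×ˢ Sᶜ).card := Finset.card_union_le _ _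
      _ = S.card * S.card + (n - S.card) * (n - S.card) := by
          rw [Finset.card_product, Finset.card_product, Finset.card_compl]
          simp [Fintype.card_fin]
  simp only [M1]
  rw [hcountA, hcountK]
  have hcard : (Fintype.card (Fin n × Fin n) : ℝ) = (n : ℝ) * n := by
    simp [Fintype.card_prod, Fintype.card_fin]
  rw [hcard, Fintype.card_fin]
  rcases Nat.eq_zero_or_pos n with hn | hn
  · subst hn
    norm_num
  · have hn' : (0:ℝ) < n := by exact_mod_cast hn
    have h1k : (1:ℝ) - (S.card : ℝ) / n = ((n - S.card : ℕ) : ℝ) / n := by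
      rw [Nat.cast_sub hk_le, sub_div, div_self (ne_of_gt hn')]
    rw [h1k, div_pow, div_pow, ← add_div,
      show ((n:ℝ) * n) = (n:ℝ)^2 by ring]
    have hcast : (P.card : ℝ) ≤ (S.card : ℝ)^2 + ((n - S.card : ℕ) : ℝ)^2 := by
      rw [pow_two, pow_two]
      exact_mod_cast hmain
    exact (div_le_div_iff_of_pos_right (pow_pos hn' 2)).mpr hcast
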